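/- Let (Ω, F, (F_t)_{t≥0}, P) be a filtered probability space. Let N denote the family of its N-negligible sets, let F̃ be the σ-algebra generated by F and N, and for each t ≥ 0 let F̃_t be the σ-algebra generated by F_{t+} := ⋂_{u>t} F_u and N. Then: (i) there exists a unique probability measure P̃ on (Ω, F̃) that coincides with P on F; (ii) the filtered probability space (Ω, F̃, (F̃_t)_{t≥0}, P̃) satisfies the N-usual conditions; (iii) it is the smallest such extension: if (Ω, F', (F'_t)_{t≥0}, P') satisfies the N-usual conditions, F' ⊇ F, F'_t ⊇ F_t for all t ≥ 0, and P' extends P, then F' ⊇ F̃, F'_t ⊇ F̃_t for all t ≥ 0, and P' extends P̃. -/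

import Mathlib

open MeasureTheory Set Filter
open scoped NNReal ENNReal

variable {Ω : Type*}

/-- A set `A` is N-negligible with respect to the filtration `𝓕` and the set function `P`
(the outer-measure attached to a probability measure): it is covered by countably many
sets `B n` with `B n ∈ 𝓕 n` and `P (B n) = 0`. -/
def NNegligible (𝓕 : ℝ≥0 → MeasurableSpace Ω) (P : Set Ω → ℝ≥0∞) (A : Set Ω) : Prop :=
  ∃ B : ℕ → Set Ω, (∀ n : ℕ, MeasurableSet[𝓕 (n : ℝ≥0)] (B n)) ∧
    (∀ n : ℕ, P (B n) = 0) ∧ A ⊆ ⋃ n, B n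

section Aux

lemma nneg_subset {𝓕 : ℝ≥0 → MeasurableSpace Ω} {m : Set Ω → ℝ≥0∞} {A A' : Set Ω}
    (h : A ⊆ A') (hA' : NNegligible 𝓕 m A') : NNegligible 𝓕 m A := by
  obtain ⟨B, h1, h2, h3⟩ := hA'
  exact ⟨B, h1, h2, h.trans h3⟩

lemma nneg_cover {F : MeasurableSpace Ω} {𝓕 : ℝ≥0 → MeasurableSpace Ω}
    (h_le : ∀ t, 𝓕 t ≤ F) (P : @Measure Ω F) {A : Set Ω}
    (hA : NNegligible 𝓕 (fun s => P s) A) :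
    ∃ C, MeasurableSet[F] C ∧ P C = 0 ∧ A ⊆ C := by
  obtain ⟨B, h1, h2, h3⟩ := hA
  exact ⟨⋃ n, B n, MeasurableSet.iUnion (fun n => h_le _ _ (h1 n)),
    measure_iUnion_null h2, h3⟩

lemma nneg_empty {F : MeasurableSpace Ω} {𝓕 : ℝ≥0 → MeasurableSpace Ω}
    (P : @Measure Ω F) : NNegligible 𝓕 (fun s => P s) (∅ : Set Ω) :=
  ⟨fun _ => ∅, fun n => @MeasurableSet.empty _ (𝓕 n), fun _ => measure_empty, by simp⟩

lemma nneg_iUnion {F : MeasurableSpace Ω} {𝓕 : ℝ≥0 → MeasurableSpace Ω}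
    (h_mono : Monotone 𝓕) (h_le : ∀ t, 𝓕 t ≤ F) (P : @Measure Ω F) {A : ℕ → Set Ω}
    (hA : ∀ k, NNegligible 𝓕 (fun s => P s) (A k)) :
    NNegligible 𝓕 (fun s => P s) (⋃ k, A k) := by
  choose B hB1 hB2 hB3 using hA
  refine ⟨fun m => ⋃ k, ⋃ n, ⋃ (_ : k ≤ m ∧ n ≤ m), B k n, ?_, ?_, ?_⟩
  · intro m
    refine MeasurableSet.iUnion fun k => MeasurableSet.iUnion fun n =>
      MeasurableSet.iUnion fun h => ?_
    exact h_mono (by exact_mod_cast h.2) _ (hB1 k n)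
  · intro m
    exact measure_iUnion_null fun k => measure_iUnion_null fun n =>
      measure_iUnion_null fun _ => hB2 k n
  · intro x hx
    obtain ⟨k, hk⟩ := mem_iUnion.mp hx
    obtain ⟨n, hn⟩ := mem_iUnion.mp (hB3 k hk)
    exact mem_iUnion.mpr ⟨max k n, mem_iUnion.mpr ⟨k, mem_iUnion.mpr ⟨n,
      mem_iUnion.mpr ⟨⟨le_max_left _ _, le_max_right _ _⟩, hn⟩⟩⟩⟩

lemma nneg_union {F : MeasurableSpace Ω} {𝓕 : ℝ≥0 → MeasurableSpace Ω}
    (h_mono : Monotone 𝓕) (h_le : ∀ t, 𝓕 t ≤ F) (P : @Measure Ω F) {A A' : Set Ω}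
    (hA : NNegligible 𝓕 (fun s => P s) A) (hA' : NNegligible 𝓕 (fun s => P s) A') :
    NNegligible 𝓕 (fun s => P s) (A ∪ A') := by
  have := nneg_iUnion h_mono h_le P (A := fun k => if k = 0 then A else A')
    (fun k => by by_cases h : k = 0 <;> simp [h, hA, hA'])
  refine nneg_subset ?_ this
  rintro x (h | h)
  · exact mem_iUnion.mpr ⟨0, by simp [h]⟩
  · exact mem_iUnion.mpr ⟨1, by simp [h]⟩

/-- Q-outer-null for any measure agreeing with P on F. -/
lemma nneg_null {F M : MeasurableSpace Ω} {𝓕 : ℝ≥0 → MeasurableSpace Ω}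
    (h_le : ∀ t, 𝓕 t ≤ F) (P : @Measure Ω F) (Q : @Measure Ω M)
    (hQ : ∀ A, MeasurableSet[F] A → Q A = P A) {A : Set Ω}
    (hA : NNegligible 𝓕 (fun s => P s) A) : Q A = 0 := by
  obtain ⟨C, hC, hC0, hAC⟩ := nneg_cover h_le P hA
  exact le_antisymm ((measure_mono hAC).trans (le_of_eq ((hQ C hC).trans hC0))) zero_le

/-- Approximation: sets of the generated σ-algebra differ from a `G`-measurable set by a
negligible set. -/
lemma nneg_approx {F : MeasurableSpace Ω} {𝓕 : ℝ≥0 → MeasurableSpace Ω}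
    (h_mono : Monotone 𝓕) (h_le : ∀ t, 𝓕 t ≤ F) (P : @Measure Ω F)
    (G : MeasurableSpace Ω) {S : Set Ω}
    (hS : MeasurableSet[MeasurableSpace.generateFrom
      ({A | MeasurableSet[G] A} ∪ {A | NNegligible 𝓕 (fun s => P s) A})] S) :
    ∃ S', MeasurableSet[G] S' ∧ NNegligible 𝓕 (fun s => P s) (symmDiff S S') := by
  induction S, hS using MeasurableSpace.generateFrom_induction with
  | hC t ht _ =>
    rcases ht with ht | ht
    · exact ⟨t, ht, by rw [symmDiff_self]; exact nneg_empty P⟩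
    · exact ⟨∅, MeasurableSet.empty, by simp only [← Set.bot_eq_empty, symmDiff_bot]; exact ht⟩
  | empty => exact ⟨∅, MeasurableSet.empty, by rw [symmDiff_self]; exact nneg_empty P⟩
  | compl t ht iht =>
    obtain ⟨S', hS', hneg⟩ := iht
    exact ⟨S'ᶜ, hS'.compl, by rwa [compl_symmDiff_compl]⟩
  | iUnion f hf ihf =>
    choose g hg1 hg2 using ihf
    refine ⟨⋃ n, g n, MeasurableSet.iUnion hg1, nneg_subset ?_ (nneg_iUnion h_mono h_le P hg2)⟩
    intro x hx
    rcases Set.mem_symmDiff.mp hx with ⟨hx1, hx2⟩ | ⟨hx1, hx2⟩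
    · obtain ⟨n, hn⟩ := mem_iUnion.mp hx1
      exact mem_iUnion.mpr ⟨n, Set.mem_symmDiff.mpr
        (Or.inl ⟨hn, fun h => hx2 (mem_iUnion.mpr ⟨n, h⟩)⟩)⟩
    · obtain ⟨n, hn⟩ := mem_iUnion.mp hx1
      exact mem_iUnion.mpr ⟨n, Set.mem_symmDiff.mpr
        (Or.inr ⟨hn, fun h => hx2 (mem_iUnion.mpr ⟨n, h⟩)⟩)⟩

/-- A `Q`-null set measurable in `𝓕til t` is N-negligible for the original filtration. -/
lemma null_meas_nneg {F M : MeasurableSpace Ω} {𝓕 : ℝ≥0 → MeasurableSpace Ω}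
    (h_mono : Monotone 𝓕) (h_le : ∀ t, 𝓕 t ≤ F) (P : @Measure Ω F) {t : ℝ≥0}
    (Q : @Measure Ω M) (hQ : ∀ A, MeasurableSet[F] A → Q A = P A) {S : Set Ω}
    (hSm : MeasurableSet[MeasurableSpace.generateFrom
      ({A | MeasurableSet[⨅ u ∈ Set.Ioi t, 𝓕 u] A} ∪
        {A | NNegligible 𝓕 (fun s => P s) A})] S)
    (hS0 : Q S = 0) : NNegligible 𝓕 (fun s => P s) S := by
  obtain ⟨S', hS'm, hΔ⟩ := nneg_approx h_mono h_le P _ hSm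
  have hΔ0 : Q (symmDiff S S') = 0 := nneg_null h_le P Q hQ hΔ
  have hS'F : MeasurableSet[F] S' := by
    have h1 : (⨅ u ∈ Set.Ioi t, 𝓕 u) ≤ F :=
      le_trans (iInf₂_le (t + 1) (lt_add_of_pos_right t one_pos)) (h_le _)
    exact h1 _ hS'm
  have hsub : S' ⊆ S ∪ symmDiff S S' := by
    intro x hx
    by_cases h : x ∈ S
    · exact Or.inl h
    · exact Or.inr (Set.mem_symmDiff.mpr (Or.inr ⟨hx, h⟩))
  have hS'0 : P S' = 0 := by
    rw [← hQ S' hS'F]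
    refine le_antisymm ((measure_mono hsub).trans ?_) zero_le
    calc Q (S ∪ symmDiff S S') ≤ Q S + Q (symmDiff S S') := measure_union_le _ _
    _ = 0 := by rw [hS0, hΔ0, add_zero]
  have hS'neg : NNegligible 𝓕 (fun s => P s) S' := by
    refine ⟨fun n => if t < (n : ℝ≥0) then S' else ∅, ?_, ?_, ?_⟩
    · intro n
      by_cases h : t < (n : ℝ≥0)
      · simpa [h] using iInf₂_le (α := MeasurableSpace Ω) (n : ℝ≥0) h _ hS'm
      · simp [h]
    · intro n
      by_cases h : t < (n : ℝ≥0) <;> simp [h, hS'0]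
    · obtain ⟨n, hn⟩ := exists_nat_gt t
      intro x hx
      exact mem_iUnion.mpr ⟨n, by simp [hn, hx]⟩
  have : S ⊆ S' ∪ symmDiff S S' := by
    intro x hx
    by_cases h : x ∈ S'
    · exact Or.inl h
    · exact Or.inr (Set.mem_symmDiff.mpr (Or.inl ⟨hx, h⟩))
  exact nneg_subset this (nneg_union h_mono h_le P hS'neg hΔ)

end Aux

section Aux2

lemma ms_univ (m : MeasurableSpace Ω) : MeasurableSet[m] (Set.univ : Set Ω) :=
  MeasurableSet.univ

lemma ms_iUnion {m : MeasurableSpace Ω} {ι : Sort*} [Countable ι] {f : ι → Set Ω}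
    (h : ∀ i, MeasurableSet[m] (f i)) : MeasurableSet[m] (⋃ i, f i) :=
  MeasurableSet.iUnion h

lemma ms_iInter {m : MeasurableSpace Ω} {ι : Sort*} [Countable ι] {f : ι → Set Ω}
    (h : ∀ i, MeasurableSet[m] (f i)) : MeasurableSet[m] (⋂ i, f i) :=
  MeasurableSet.iInter h

lemma ms_inter {m : MeasurableSpace Ω} {s t : Set Ω}
    (hs : MeasurableSet[m] s) (ht : MeasurableSet[m] t) : MeasurableSet[m] (s ∩ t) :=
  hs.inter ht

lemma ms_symmDiff {m : MeasurableSpace Ω} {s t : Set Ω}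
    (hs : MeasurableSet[m] s) (ht : MeasurableSet[m] t) : MeasurableSet[m] (symmDiff s t) :=
  hs.symmDiff ht

lemma car_meas {F : MeasurableSpace Ω} (P : @Measure Ω F) :
    F ≤ OuterMeasure.caratheodory (@Measure.toOuterMeasure Ω F P) :=
  le_toOuterMeasure_caratheodory P

lemma car_null {F : MeasurableSpace Ω} (P : @Measure Ω F) {s : Set Ω}
    (h : ∃ C, MeasurableSet[F] C ∧ P C = 0 ∧ s ⊆ C) :
    MeasurableSet[OuterMeasure.caratheodory (@Measure.toOuterMeasure Ω F P)] s := by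
  obtain ⟨C, hC, hC0, hsub⟩ := h
  have hs0 : P.toOuterMeasure s = 0 := by
    exact le_antisymm (le_trans (P.toOuterMeasure.mono hsub) hC0.le) zero_le
  refine (OuterMeasure.isCaratheodory_iff_le _).mpr fun u => ?_
  have h1 : P.toOuterMeasure (u ∩ s) = 0 :=
    le_antisymm (le_trans (P.toOuterMeasure.mono Set.inter_subset_right) hs0.le) zero_le
  rw [h1, zero_add]
  exact P.toOuterMeasure.mono Set.diff_subset

lemma exists_extension {F M : MeasurableSpace Ω} (P : @Measure Ω F)
    (hcar : M ≤ OuterMeasure.caratheodory (@Measure.toOuterMeasure Ω F P))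
    (hFM : F ≤ M) :
    ∃ Q : @Measure Ω M, ∀ A : Set Ω, MeasurableSet[F] A → Q A = P A := by
  refine ⟨@OuterMeasure.toMeasure Ω M (@Measure.toOuterMeasure Ω F P) hcar, fun A hA => ?_⟩
  rw [@MeasureTheory.toMeasure_apply Ω M (@Measure.toOuterMeasure Ω F P) hcar A (hFM A hA)]
  rfl

lemma ext_helper {M : MeasurableSpace Ω} (Q R : @Measure Ω M) {C : Set (Set Ω)}
    (hgen : M = MeasurableSpace.generateFrom C) (hpi : IsPiSystem C)
    (hfin : Q Set.univ ≠ ⊤) (h : ∀ s ∈ C, Q s = R s)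
    (huniv : Q Set.univ = R Set.univ) : Q = R := by
  have hfinQ : @IsFiniteMeasure Ω M Q := ⟨lt_top_iff_ne_top.mpr hfin⟩
  exact @ext_of_generate_finite Ω M Q R C hgen hpi hfinQ h huniv

lemma trim_helper {M M' : MeasurableSpace Ω} (P' : @Measure Ω M') (h : M ≤ M') :
    ∃ Q : @Measure Ω M, ∀ s : Set Ω, MeasurableSet[M] s → Q s = P' s :=
  ⟨P'.trim h, fun _ hs => trim_measurableSet_eq h hs⟩

end Aux2

/-- The N-augmentation of a filtered probability space: existence and uniqueness of the
extension `P̃` of `P` to `F̃ = σ(F ∪ 𝓝)`, the fact that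
`(Ω, F̃, (F̃ₜ)ₜ, P̃)` satisfies the N-usual conditions, and its minimality among all
extensions satisfying the N-usual conditions. -/
theorem n_augmentation
    (F : MeasurableSpace Ω) (𝓕 : ℝ≥0 → MeasurableSpace Ω)
    (h_mono : Monotone 𝓕) (h_le : ∀ t, 𝓕 t ≤ F)
    (P : @Measure Ω F) (hP : @IsProbabilityMeasure Ω F P)
    (𝓝neg : Set (Set Ω)) (h𝓝 : 𝓝neg = {A | NNegligible 𝓕 (fun s => P s) A})
    (Ftil : MeasurableSpace Ω)
    (hFtil : Ftil = MeasurableSpace.generateFrom ({A | MeasurableSet[F] A} ∪ 𝓝neg))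
    (𝓕til : ℝ≥0 → MeasurableSpace Ω)
    (h𝓕til : ∀ t : ℝ≥0, 𝓕til t =
      MeasurableSpace.generateFrom
        ({A | MeasurableSet[⨅ u ∈ Set.Ioi t, 𝓕 u] A} ∪ 𝓝neg)) :
    -- (i) existence and uniqueness of the extension of `P` to `F̃`
    (∃! Ptil : @Measure Ω Ftil, ∀ A : Set Ω, MeasurableSet[F] A → Ptil A = P A) ∧
    ∀ Ptil : @Measure Ω Ftil, (∀ A : Set Ω, MeasurableSet[F] A → Ptil A = P A) →
      -- (ii) the N-augmentation satisfies the N-usual conditions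
      (((∀ A : Set Ω, NNegligible 𝓕til (fun s => Ptil s) A → MeasurableSet[𝓕til 0] A) ∧
        ∀ t : ℝ≥0, 𝓕til t = ⨅ u ∈ Set.Ioi t, 𝓕til u) ∧
      -- (iii) minimality among all extensions satisfying the N-usual conditions
      ∀ (F' : MeasurableSpace Ω) (𝓕' : ℝ≥0 → MeasurableSpace Ω) (P' : @Measure Ω F'),
        Monotone 𝓕' → (∀ t, 𝓕' t ≤ F') →
        (∀ A : Set Ω, NNegligible 𝓕' (fun s => P' s) A → MeasurableSet[𝓕' 0] A) →
        (∀ t : ℝ≥0, 𝓕' t = ⨅ u ∈ Set.Ioi t, 𝓕' u) →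
        F ≤ F' → (∀ t, 𝓕 t ≤ 𝓕' t) →
        (∀ A : Set Ω, MeasurableSet[F] A → P' A = P A) →
        Ftil ≤ F' ∧ (∀ t, 𝓕til t ≤ 𝓕' t) ∧
          ∀ A : Set Ω, MeasurableSet[Ftil] A → P' A = Ptil A) := by
  subst h𝓝
  have hF_le_Ftil : F ≤ Ftil := by
    rw [hFtil]
    intro s hs
    exact MeasurableSpace.measurableSet_generateFrom (Or.inl hs)
  -- the candidate measure
  have hcar : Ftil ≤ OuterMeasure.caratheodory (@Measure.toOuterMeasure Ω F P) := by
    rw [hFtil]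
    refine MeasurableSpace.generateFrom_le ?_
    rintro s (hs | hs)
    · exact car_meas P s hs
    · exact car_null P (nneg_cover h_le P hs)
  obtain ⟨Ptil₀, hPtil₀⟩ := exists_extension P hcar hF_le_Ftil
  -- π-system
  have hpi : IsPiSystem ({A | MeasurableSet[F] A} ∪
      {A | NNegligible 𝓕 (fun s => P s) A}) := by
    rintro s (hs | hs) t (ht | ht) -
    · exact Or.inl (ms_inter hs ht)
    · exact Or.inr (nneg_subset Set.inter_subset_right ht)
    · exact Or.inr (nneg_subset Set.inter_subset_left hs)
    · exact Or.inr (nneg_subset Set.inter_subset_left hs)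
  -- uniqueness of the extension
  have huniq : ∀ Q R : @Measure Ω Ftil, (∀ A : Set Ω, MeasurableSet[F] A → Q A = P A) →
      (∀ A : Set Ω, MeasurableSet[F] A → R A = P A) → Q = R := by
    intro Q R hQ hR
    refine ext_helper Q R hFtil hpi ?_ ?_ ?_
    · rw [hQ Set.univ (ms_univ F), hP.measure_univ]
      exact ENNReal.one_ne_top
    · rintro s (hs | hs)
      · rw [hQ s hs, hR s hs]
      · rw [nneg_null h_le P Q hQ hs, nneg_null h_le P R hR hs]
    · rw [hQ Set.univ (ms_univ F), hR Set.univ (ms_univ F)]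
  refine ⟨⟨Ptil₀, hPtil₀, fun Q hQ => huniq Q Ptil₀ hQ hPtil₀⟩, ?_⟩
  intro Ptil hPtil
  refine ⟨⟨?_, ?_⟩, ?_⟩
  · -- (ii) N-completeness
    intro A hA
    obtain ⟨B, hB1, hB2, hB3⟩ := hA
    have hBneg : ∀ n : ℕ, NNegligible 𝓕 (fun s => P s) (B n) := by
      intro n
      have hBm : MeasurableSet[MeasurableSpace.generateFrom
          ({A | MeasurableSet[⨅ u ∈ Set.Ioi ((n : ℕ) : ℝ≥0), 𝓕 u] A} ∪
            {A | NNegligible 𝓕 (fun s => P s) A})] (B n) := by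
        rw [← h𝓕til]
        exact hB1 n
      exact null_meas_nneg h_mono h_le P Ptil hPtil hBm (hB2 n)
    have hAneg : NNegligible 𝓕 (fun s => P s) A :=
      nneg_subset hB3 (nneg_iUnion h_mono h_le P hBneg)
    rw [h𝓕til 0]
    exact MeasurableSpace.measurableSet_generateFrom (Or.inr hAneg)
  · -- (ii) right-continuity
    intro t
    have h𝓕tilmono : Monotone 𝓕til := by
      intro a b hab
      rw [h𝓕til a, h𝓕til b]
      refine MeasurableSpace.generateFrom_mono (Set.union_subset_union_left _ ?_)
      intro s hs
      exact (le_iInf₂ fun u hu => iInf₂_le u (lt_of_le_of_lt hab hu) :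
        (⨅ u ∈ Set.Ioi a, 𝓕 u) ≤ ⨅ u ∈ Set.Ioi b, 𝓕 u) s hs
    refine le_antisymm (le_iInf₂ fun u hu => h𝓕tilmono hu.le) ?_
    intro S hS
    have hSu : ∀ u : ℝ≥0, t < u → MeasurableSet[𝓕til u] S := fun u hu =>
      iInf₂_le (α := MeasurableSpace Ω) u hu S hS
    -- approximating sequence
    set u : ℕ → ℝ≥0 := fun n => t + 1 / (n + 1) with hu_def
    have hut : ∀ n : ℕ, t < u n := by
      intro n
      refine lt_add_of_pos_right t ?_
      positivity
    have humono : ∀ {N n : ℕ}, N ≤ n → u n ≤ u N := by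
      intro N n hNn
      refine add_le_add_right ?_ t
      refine one_div_le_one_div_of_le (by positivity) ?_
      exact add_le_add_left (by exact_mod_cast hNn) 1
    have happrox : ∀ n : ℕ, ∃ S', MeasurableSet[⨅ v ∈ Set.Ioi (u n), 𝓕 v] S' ∧
        NNegligible 𝓕 (fun s => P s) (symmDiff S S') := by
      intro n
      refine nneg_approx h_mono h_le P _ ?_
      rw [← h𝓕til]
      exact hSu (u n) (hut n)
    choose S'' hS''m hS''neg using happrox
    set S' : Set Ω := ⋂ m, ⋃ n, ⋃ (_ : m ≤ n), S'' n with hS'def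
    have hS'G : MeasurableSet[⨅ v ∈ Set.Ioi t, 𝓕 v] S' := by
      simp only [MeasurableSpace.measurableSet_iInf]
      intro v hv
      have hvt : t < v := hv
      obtain ⟨N, hN⟩ := exists_nat_one_div_lt (tsub_pos_of_lt hvt)
      have huNv : u N < v := by
        have h1 : t + 1 / ((N : ℝ≥0) + 1) < t + (v - t) := by
          exact add_lt_add_right hN t
        rwa [add_tsub_cancel_of_le hvt.le] at h1
      have hrw : S' = ⋂ m, ⋃ n, ⋃ (_ : m + N ≤ n), S'' n := by
        rw [hS'def]
        ext x
        simp only [Set.mem_iInter, Set.mem_iUnion, exists_prop]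
        constructor
        · intro h m
          obtain ⟨n, hn1, hn2⟩ := h (m + N)
          exact ⟨n, hn1, hn2⟩
        · intro h m
          obtain ⟨n, hn1, hn2⟩ := h m
          exact ⟨n, le_trans (Nat.le_add_right m N) hn1, hn2⟩
      rw [hrw]
      refine ms_iInter fun m => ms_iUnion fun n => ms_iUnion fun hn => ?_
      have hvn : v ∈ Set.Ioi (u n) :=
        lt_of_le_of_lt (humono (le_trans (Nat.le_add_left N m) hn)) huNv
      exact iInf₂_le (α := MeasurableSpace Ω) v hvn _ (hS''m n)
    have hΔsub : symmDiff S S' ⊆ ⋃ n, symmDiff S (S'' n) := by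
      intro x hx
      rcases Set.mem_symmDiff.mp hx with ⟨hxS, hxS'⟩ | ⟨hxS', hxS⟩
      · rw [hS'def] at hxS'
        simp only [Set.mem_iInter, Set.mem_iUnion, exists_prop, not_forall, not_exists,
          not_and] at hxS'
        obtain ⟨m, hm⟩ := hxS'
        exact Set.mem_iUnion.mpr ⟨m, Set.mem_symmDiff.mpr (Or.inl ⟨hxS, hm m le_rfl⟩)⟩
      · rw [hS'def] at hxS'
        have := Set.mem_iInter.mp hxS' 0
        simp only [Set.mem_iUnion, exists_prop] at this
        obtain ⟨n, -, hn⟩ := this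
        exact Set.mem_iUnion.mpr ⟨n, Set.mem_symmDiff.mpr (Or.inr ⟨hn, hxS⟩)⟩
    have hΔneg : NNegligible 𝓕 (fun s => P s) (symmDiff S S') :=
      nneg_subset hΔsub (nneg_iUnion h_mono h_le P hS''neg)
    have hSrw : symmDiff S' (symmDiff S S') = S := by
      rw [symmDiff_comm S S', symmDiff_symmDiff_cancel_left]
    rw [h𝓕til t, ← hSrw]
    exact ms_symmDiff (MeasurableSpace.measurableSet_generateFrom (Or.inl hS'G))
      (MeasurableSpace.measurableSet_generateFrom (Or.inr hΔneg))
  · -- (iii) minimality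
    intro F' 𝓕' P' h'mono h'le h'comp h'rc hFF' h𝓕𝓕' hP'P
    have h𝓝F' : ∀ A : Set Ω, NNegligible 𝓕 (fun s => P s) A → MeasurableSet[𝓕' 0] A := by
      intro A hA
      obtain ⟨B, hB1, hB2, hB3⟩ := hA
      refine h'comp A ⟨B, fun n => h𝓕𝓕' _ _ (hB1 n), fun n => ?_, hB3⟩
      show P' (B n) = 0
      rw [hP'P _ (h_le _ _ (hB1 n))]
      exact hB2 n
    have hFtilF' : Ftil ≤ F' := by
      rw [hFtil]
      refine MeasurableSpace.generateFrom_le ?_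
      rintro s (hs | hs)
      · exact hFF' s hs
      · exact h'le 0 s (h𝓝F' s hs)
    have h𝓕tilF' : ∀ t, 𝓕til t ≤ 𝓕' t := by
      intro t
      rw [h𝓕til t]
      refine MeasurableSpace.generateFrom_le ?_
      rintro s (hs | hs)
      · refine (?_ : (⨅ u ∈ Set.Ioi t, 𝓕 u) ≤ 𝓕' t) s hs
        rw [h'rc t]
        exact le_iInf₂ fun u hu => le_trans (iInf₂_le u hu) (h𝓕𝓕' u)
      · exact h'mono (zero_le : (0 : ℝ≥0) ≤ t) s (h𝓝F' s hs)
    refine ⟨hFtilF', h𝓕tilF', ?_⟩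
    obtain ⟨Q, hQ⟩ := trim_helper P' hFtilF'
    have hQP : ∀ A : Set Ω, MeasurableSet[F] A → Q A = P A := fun A hA =>
      (hQ A (hF_le_Ftil A hA)).trans (hP'P A hA)
    have hQPtil : Q = Ptil := huniq Q Ptil hQP hPtil
    intro A hA
    rw [← hQ A hA, hQPtil]
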